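/- arXiv:2007.06538 — 2 statements merged into one kernel-verified Lean document; each statement's English description precedes it below -/
import Mathlib

section
/- Let τ, μ ∈ S_4 each have cycle type (2,2) (products of two disjoint transpositions), and let a, b ∈ (ℤ/2)^4. If a_1 + a_2 + a_3 + a_4 = b_1 + b_2 + b_3 + b_4 in ℤ/2 (in particular, if (a,τ) and (b,μ) are conjugate in W_4), then (a,τ) and (b,μ) are square commutative, i.e. sq((a,τ),(b,μ)) = (b,μ) and sq((b,μ),(a,τ)) = (a,τ). -/
/-- The action of a permutation `σ ∈ S_n` on a vector `a ∈ (ℤ/2)^n`: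
`(σ · a)_i = a_{σ⁻¹ i}`. -/
def permAct {n : ℕ} (σ : Equiv.Perm (Fin n)) (a : Fin n → ZMod 2) : Fin n → ZMod 2 :=
  fun i => a (σ⁻¹ i)

/-- The underlying set of the hyperoctahedral group `W n = (ℤ/2)^n ⋊ S_n`. -/
@[ext]
structure W (n : ℕ) where
  vec : Fin n → ZMod 2
  perm : Equiv.Perm (Fin n)

/-- Group structure of `W n`: `(a,σ)(b,μ) = (a + σ·b, σμ)`. -/
instance (n : ℕ) : Group (W n) where
  mul x y := ⟨x.vec + permAct x.perm y.vec, x.perm * y.perm⟩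
  one := ⟨0, 1⟩
  inv x := ⟨permAct x.perm⁻¹ (-x.vec), x.perm⁻¹⟩
  mul_assoc x y z := by
    refine W.ext ?_ ?_
    · show (x.vec + permAct x.perm y.vec) + permAct (x.perm * y.perm) z.vec
        = x.vec + permAct x.perm (y.vec + permAct y.perm z.vec)
      funext i
      simp [permAct, mul_inv_rev, Equiv.Perm.mul_apply, add_assoc]
    · exact mul_assoc _ _ _
  one_mul x := by
    refine W.ext ?_ ?_
    · show (0 : Fin n → ZMod 2) + permAct 1 x.vec = x.vec
      funext i; simp [permAct]
    · exact one_mul _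
  mul_one x := by
    refine W.ext ?_ ?_
    · show x.vec + permAct x.perm 0 = x.vec
      funext i; simp [permAct]
    · exact mul_one _
  inv_mul_cancel x := by
    refine W.ext ?_ ?_
    · show permAct x.perm⁻¹ (-x.vec) + permAct x.perm⁻¹ x.vec = 0
      funext i; simp only [permAct, Pi.add_apply, Pi.neg_apply, Pi.zero_apply, neg_add_cancel]
    · exact inv_mul_cancel _

@[simp] theorem W.mul_vec {n : ℕ} (x y : W n) :
    (x * y).vec = x.vec + permAct x.perm y.vec := rfl
@[simp] theorem W.mul_perm {n : ℕ} (x y : W n) :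
    (x * y).perm = x.perm * y.perm := rfl
@[simp] theorem W.one_vec {n : ℕ} : (1 : W n).vec = 0 := rfl
@[simp] theorem W.one_perm {n : ℕ} : (1 : W n).perm = 1 := rfl
@[simp] theorem W.inv_vec {n : ℕ} (x : W n) :
    (x⁻¹).vec = permAct x.perm⁻¹ (-x.vec) := rfl
@[simp] theorem W.inv_perm {n : ℕ} (x : W n) : (x⁻¹).perm = x.perm⁻¹ := rfl

/-- Conjugation `x ▷ y = x y x⁻¹` in a group. -/
def conjAct' {G : Type*} [Group G] (x y : G) : G := x * y * x⁻¹

/-- `sq(x,y) = x ▷ (y ▷ (x ▷ y))`. -/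
def sqD {G : Type*} [Group G] (x y : G) : G := conjAct' x (conjAct' y (conjAct' x y))

/-- Conjugacy class of `x` in the group `G`. -/
def conjClass {G : Type*} [Group G] (x : G) : Set G := {y | ∃ t : G, y = t * x * t⁻¹}

/-- A subset `O` of a group is of type D. -/
def IsTypeD {G : Type*} [Group G] (O : Set G) : Prop :=
  ∃ R S : Set G, R ⊆ O ∧ S ⊆ O ∧ R.Nonempty ∧ S.Nonempty ∧ Disjoint R S ∧
    (∀ r ∈ R, ∀ r' ∈ R, conjAct' r r' ∈ R) ∧
    (∀ s ∈ S, ∀ s' ∈ S, conjAct' s s' ∈ S) ∧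
    (∀ r ∈ R, ∀ s ∈ S, conjAct' r s ∈ S ∧ conjAct' s r ∈ R) ∧
    (∃ a ∈ R, ∃ b ∈ S, sqD a b ≠ b)

/-- The subgroup `K_n ⋊ S_n` of `W n`, where `K_n = {a : a_1 + ⋯ + a_n = 0}`. -/
def Ksub (n : ℕ) : Subgroup (W n) where
  carrier := {x | ∑ i, x.vec i = 0}
  one_mem' := by simp
  mul_mem' := by
    intro x y hx hy
    simp only [Set.mem_setOf_eq] at *
    rw [W.mul_vec]
    simp only [Pi.add_apply, Finset.sum_add_distrib, hx, zero_add, permAct]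
    rw [Equiv.sum_comp x.perm⁻¹ y.vec]
    exact hy
  inv_mem' := by
    intro x hx
    simp only [Set.mem_setOf_eq] at *
    rw [W.inv_vec]
    simp only [permAct, inv_inv, Pi.neg_apply]
    rw [Finset.sum_neg_distrib, Equiv.sum_comp x.perm x.vec, hx, neg_zero]


instance (n : ℕ) : DecidableEq (W n) := fun x y =>
  decidable_of_iff _ (W.ext_iff (x := x) (y := y)).symm

/-- If `xyxy = yxyx` then `sq(x,y) = y`. -/
theorem sqD_eq_of {G : Type*} [Group G] (x y : G) (h : x*y*x*y = y*x*y*x) : sqD x y = y := by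
  apply mul_right_cancel (b := x*(y*x))
  calc sqD x y * (x*(y*x)) = x*y*x*y := by
        simp [sqD, conjAct', mul_assoc]
    _ = y*x*y*x := h
    _ = y * (x*(y*x)) := by simp [mul_assoc]

/-- The three permutations of cycle type (2,2) in `S_4`. -/
def cs : Fin 3 → Equiv.Perm (Fin 4)
  | 0 => Equiv.swap 0 1 * Equiv.swap 2 3
  | 1 => Equiv.swap 0 2 * Equiv.swap 1 3
  | 2 => Equiv.swap 0 3 * Equiv.swap 1 2

theorem classify22 : ∀ τ : Equiv.Perm (Fin 4), τ^2 = 1 → (∀ i, τ i ≠ i) →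
    ∃ p : Fin 3, τ = cs p := by decide

set_option maxHeartbeats 4000000 in
theorem key22 : ∀ p q : Fin 3, ∀ a b : Fin 4 → ZMod 2, ∑ i, a i = ∑ i, b i →
    W.mk a (cs p) * W.mk b (cs q) * W.mk a (cs p) * W.mk b (cs q)
      = W.mk b (cs q) * W.mk a (cs p) * W.mk b (cs q) * W.mk a (cs p) := by decide

theorem props_of_cycleType22 (τ : Equiv.Perm (Fin 4)) (hτ : τ.cycleType = {2,2}) :
    τ^2 = 1 ∧ ∀ i, τ i ≠ i := by
  constructor
  · have h := τ.lcm_cycleType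
    rw [hτ] at h
    have h2 : orderOf τ = 2 := by rw [← h]; decide
    rw [← h2]; exact pow_orderOf_eq_one τ
  · have h := τ.sum_cycleType
    rw [hτ] at h
    have hu : τ.support = Finset.univ := Finset.eq_univ_of_card _ (by simp [← h])
    intro i
    exact Equiv.Perm.mem_support.mp (hu ▸ Finset.mem_univ i)

/-- for `τ, μ ∈ S_4` of cycle type `(2,2)`, if
`a₁+a₂+a₃+a₄ = b₁+b₂+b₃+b₄` then `(a,τ)` and `(b,μ)` are square commutative. -/
theorem square_commutative_22 (τ μ : Equiv.Perm (Fin 4))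
    (hτ : τ.cycleType = {2, 2}) (hμ : μ.cycleType = {2, 2})
    (a b : Fin 4 → ZMod 2) (hsum : ∑ i, a i = ∑ i, b i) :
    sqD (W.mk a τ) (W.mk b μ) = W.mk b μ ∧
      sqD (W.mk b μ) (W.mk a τ) = W.mk a τ := by
  obtain ⟨hτ2, hτf⟩ := props_of_cycleType22 τ hτ
  obtain ⟨hμ2, hμf⟩ := props_of_cycleType22 μ hμ
  obtain ⟨p, rfl⟩ := classify22 τ hτ2 hτf
  obtain ⟨q, rfl⟩ := classify22 μ hμ2 hμf
  have h := key22 p q a b hsum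
  exact ⟨sqD_eq_of _ _ h, sqD_eq_of _ _ h.symm⟩
end

section
/- Let n ≥ 2 and let τ, μ ∈ S_n be conjugate in S_n with sq(τ,μ) ≠ μ and τ(n) = μ(n) = n. Let a ∈ (ℤ/2)^n and suppose there exists i with τ(i) = i, μ(i) = i and a_i ≠ a_n. Let H be either W_n or the subgroup K_n ⋊ S_n, and suppose (a,τ) ∈ H. Then the conjugacy class of (a,τ) in H is of type D. -/
@[simp] theorem W.mk_vec' {n : ℕ} (v : Fin n → ZMod 2) (p : Equiv.Perm (Fin n)) :
    (W.mk v p).vec = v := rfl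
@[simp] theorem W.mk_perm' {n : ℕ} (v : Fin n → ZMod 2) (p : Equiv.Perm (Fin n)) :
    (W.mk v p).perm = p := rfl

lemma keyLemma {n : ℕ} (N : Fin n) (x y : W n) (hx : x.perm N = N) (hy : y.perm N = N) :
    (conjAct' x y).perm N = N ∧ (conjAct' x y).vec N = y.vec N := by
  have hx' : x.perm⁻¹ N = N := x.perm.injective (by rw [← Equiv.Perm.mul_apply, mul_inv_cancel, Equiv.Perm.one_apply, hx])
  have hy' : y.perm⁻¹ N = N := y.perm.injective (by rw [← Equiv.Perm.mul_apply, mul_inv_cancel, Equiv.Perm.one_apply, hy])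
  constructor
  · simp only [conjAct', W.mul_perm, W.inv_perm, Equiv.Perm.mul_apply, hx', hy', hx, hy]
  · simp only [conjAct', W.mul_vec, W.inv_vec, W.mul_perm, Pi.add_apply, permAct,
      mul_inv_rev, Equiv.Perm.mul_apply, inv_inv, Pi.neg_apply, hx', hy', hx, hy]
    ring

lemma conjClass_conj {G : Type*} [Group G] {x z w : G} (_ : z ∈ conjClass x)
    (hw : w ∈ conjClass x) : conjAct' z w ∈ conjClass x := by
  obtain ⟨u, hu⟩ := hw
  exact ⟨z * u, by rw [conjAct', hu]; group⟩

lemma coe_conjAct' {G : Type*} [Group G] (H : Subgroup G) (x y : H) :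
    ((conjAct' x y : H) : G) = conjAct' (x : G) (y : G) := by
  simp [conjAct']

lemma coe_sqD {G : Type*} [Group G] (H : Subgroup G) (x y : H) :
    ((sqD x y : H) : G) = sqD (x : G) (y : G) := by
  simp [sqD, conjAct']

lemma perm_sqD {n : ℕ} (x y : W n) : (sqD x y).perm = sqD x.perm y.perm := by
  simp [sqD, conjAct']

/-- if `τ, μ ∈ S_n` are conjugate with `sq(τ,μ) ≠ μ` and both fix
the last point `n`, and `a_i ≠ a_n` for some common fixed point `i`, then the
conjugacy class of `(a,τ)` in `H` (where `H` is `W n` or `K_n ⋊ S_n`) is of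
type D. -/
theorem typeD_of_nonsquare (n : ℕ) (hn : 2 ≤ n) (τ μ : Equiv.Perm (Fin n))
    (hconj : IsConj τ μ) (hsq : sqD τ μ ≠ μ)
    (hτn : τ ⟨n - 1, by omega⟩ = ⟨n - 1, by omega⟩)
    (hμn : μ ⟨n - 1, by omega⟩ = ⟨n - 1, by omega⟩)
    (a : Fin n → ZMod 2)
    (hi : ∃ i : Fin n, τ i = i ∧ μ i = i ∧ a i ≠ a ⟨n - 1, by omega⟩)
    (H : Subgroup (W n)) (hH : H = ⊤ ∨ H = Ksub n)
    (hw : W.mk a τ ∈ H) :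
    IsTypeD (conjClass (⟨W.mk a τ, hw⟩ : H)) := by
  have hn1 : n - 1 < n := by omega
  obtain ⟨i, hτi, hμi, hai⟩ := hi
  obtain ⟨N, hτN, hμN, haN⟩ : ∃ N : Fin n, τ N = N ∧ μ N = N ∧ a i ≠ a N :=
    ⟨⟨n - 1, hn1⟩, hτn, hμn, hai⟩
  obtain ⟨σ, hσ⟩ := isConj_iff.mp hconj
  have hτj : τ (σ⁻¹ N) = σ⁻¹ N := by
    apply σ.injective
    have h1 : (σ * τ * σ⁻¹) N = N := by rw [hσ]; exact hμN
    simp only [Equiv.Perm.mul_apply] at h1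
    rw [h1, ← Equiv.Perm.mul_apply, mul_inv_cancel, Equiv.Perm.one_apply]
  obtain ⟨π, hπτ, hπv⟩ :
      ∃ π : Equiv.Perm (Fin n), π * τ * π⁻¹ = μ ∧ a (π⁻¹ N) = a i := by
    by_cases h : a (σ⁻¹ N) = a i
    · exact ⟨σ, hσ, h⟩
    · have hs : τ * Equiv.swap (σ⁻¹ N) i = Equiv.swap (σ⁻¹ N) i * τ := by
        rw [Equiv.mul_swap_eq_swap_mul, hτj, hτi]
      have hcc : Equiv.swap (σ⁻¹ N) i * τ * (Equiv.swap (σ⁻¹ N) i)⁻¹ = τ := by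
        rw [← hs, mul_inv_cancel_right]
      refine ⟨σ * Equiv.swap (σ⁻¹ N) i, ?_, ?_⟩
      · rw [← hσ]
        conv_rhs => rw [← hcc]
        group
      · rw [mul_inv_rev, Equiv.Perm.mul_apply, Equiv.swap_inv, Equiv.swap_apply_left]
  have htH : W.mk 0 π ∈ H := by
    rcases hH with h | h
    · subst h; trivial
    · subst h
      show ∑ k : Fin n, (W.mk 0 π).vec k = 0
      simp
  obtain ⟨s₀, hs₀O, hs₀perm, hs₀vec⟩ :
      ∃ s₀ : H, s₀ ∈ conjClass (⟨W.mk a τ, hw⟩ : H) ∧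
        ((s₀ : W n)).perm = μ ∧ ((s₀ : W n)).vec N = a i := by
    refine ⟨conjAct' ⟨W.mk 0 π, htH⟩ ⟨W.mk a τ, hw⟩, ⟨⟨W.mk 0 π, htH⟩, rfl⟩, ?_, ?_⟩
    · rw [coe_conjAct']
      show π * τ * π⁻¹ = μ
      exact hπτ
    · rw [coe_conjAct']
      show (conjAct' (W.mk 0 π) (W.mk a τ)).vec N = a i
      simp only [conjAct', W.mul_vec, W.inv_vec, W.mul_perm, W.inv_perm,
        W.mk_vec', W.mk_perm', permAct, Pi.add_apply, Pi.neg_apply,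
        Pi.zero_apply, neg_zero, add_zero, zero_add]
      exact hπv
  have hx₀R : (⟨W.mk a τ, hw⟩ : H) ∈ conjClass (⟨W.mk a τ, hw⟩ : H) := ⟨1, by group⟩
  refine ⟨{z : H | z ∈ conjClass (⟨W.mk a τ, hw⟩ : H) ∧
      (z : W n).perm N = N ∧ (z : W n).vec N = a N},
    {z : H | z ∈ conjClass (⟨W.mk a τ, hw⟩ : H) ∧
      (z : W n).perm N = N ∧ (z : W n).vec N = a i},
    fun z hz => hz.1, fun z hz => hz.1,
    ⟨⟨W.mk a τ, hw⟩, hx₀R, hτN, rfl⟩,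
    ⟨s₀, hs₀O, by rw [hs₀perm]; exact hμN, hs₀vec⟩, ?_, ?_, ?_, ?_, ?_⟩
  · rw [Set.disjoint_left]
    rintro z ⟨-, -, h1⟩ ⟨-, -, h2⟩
    exact haN (h2.symm.trans h1)
  · rintro r ⟨hrO, hrp, hrv⟩ r' ⟨hrO', hrp', hrv'⟩
    have key := keyLemma N (r : W n) (r' : W n) hrp hrp'
    exact ⟨conjClass_conj hrO hrO', by rw [coe_conjAct']; exact key.1,
      by rw [coe_conjAct', key.2]; exact hrv'⟩
  · rintro r ⟨hrO, hrp, hrv⟩ r' ⟨hrO', hrp', hrv'⟩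
    have key := keyLemma N (r : W n) (r' : W n) hrp hrp'
    exact ⟨conjClass_conj hrO hrO', by rw [coe_conjAct']; exact key.1,
      by rw [coe_conjAct', key.2]; exact hrv'⟩
  · rintro r ⟨hrO, hrp, hrv⟩ s ⟨hsO, hsp, hsv⟩
    have key1 := keyLemma N (r : W n) (s : W n) hrp hsp
    have key2 := keyLemma N (s : W n) (r : W n) hsp hrp
    exact ⟨⟨conjClass_conj hrO hsO, by rw [coe_conjAct']; exact key1.1,
        by rw [coe_conjAct', key1.2]; exact hsv⟩,
      ⟨conjClass_conj hsO hrO, by rw [coe_conjAct']; exact key2.1,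
        by rw [coe_conjAct', key2.2]; exact hrv⟩⟩
  · refine ⟨⟨W.mk a τ, hw⟩, ⟨hx₀R, hτN, rfl⟩, s₀,
      ⟨hs₀O, by rw [hs₀perm]; exact hμN, hs₀vec⟩, fun h => hsq ?_⟩
    have h2 := congrArg (fun z : H => ((z : W n)).perm) h
    rw [coe_sqD, perm_sqD, hs₀perm] at h2
    exact h2
end
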